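/- For an integer n ≥ 2, let Q_n = {x ∈ ℝ^n : x ≥ 0, x_i + Σ_{j ∈ [n]\{i}} 2x_j ≥ 2 for all i ∈ [n]} and let c be the all-ones objective. Then inf{cᵀx : x ∈ 1𝒜(Q_n)} = inf{cᵀx : x ∈ 1𝒞(Q_n)} = 2n/(2n−1), while inf{cᵀx : x ∈ 𝒞(Q_n)} ≥ 2 and inf{cᵀx : x ∈ 𝒜(Q_n)} ≥ 2. Consequently, for every ε > 0 there is a covering polyhedron for which neither the 1-row aggregation closure is a (2−ε)-approximation of the aggregation closure nor the 1-row CG closure is a (2−ε)-approximation of the CG closure. -/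

import Mathlib

open Finset

/-- Dot product of two vectors in `ℝ^n`. -/
def dotp {n : ℕ} (c x : Fin n → ℝ) : ℝ := ∑ j, c j * x j

/-- A point of `ℝ^n` is integral if all its coordinates are integers. -/
def isIntPt {n : ℕ} (x : Fin n → ℝ) : Prop := ∀ j, ∃ z : ℤ, x j = (z : ℝ)

/-- The value `sup { cᵀ x : x ∈ S }`, in the extended reals. -/
noncomputable def supVal {n : ℕ} (c : Fin n → ℝ) (S : Set (Fin n → ℝ)) : EReal :=
  ⨆ x ∈ S, ((dotp c x : ℝ) : EReal)

/-- The value `inf { cᵀ x : x ∈ S }`, in the extended reals. -/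
noncomputable def infVal {n : ℕ} (c : Fin n → ℝ) (S : Set (Fin n → ℝ)) : EReal :=
  ⨅ x ∈ S, ((dotp c x : ℝ) : EReal)

/-- The polyhedron `{x ≥ 0 : A x ≤ b}`. -/
def packLP {n m : ℕ} (A : Matrix (Fin m) (Fin n) ℝ) (b : Fin m → ℝ) : Set (Fin n → ℝ) :=
  {x | (∀ j, 0 ≤ x j) ∧ ∀ i, dotp (A i) x ≤ b i}

/-- Aggregation closure of a packing polyhedron. -/
def aggP {n m : ℕ} (A : Matrix (Fin m) (Fin n) ℝ) (b : Fin m → ℝ) : Set (Fin n → ℝ) :=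
  ⋂ lam : {l : Fin m → ℝ // ∀ i, 0 ≤ l i},
    convexHull ℝ {x | (∀ j, 0 ≤ x j) ∧ isIntPt x ∧
      dotp (fun j => ∑ i, lam.1 i * A i j) x ≤ ∑ i, lam.1 i * b i}

/-- 1-row aggregation closure of a packing polyhedron. -/
def oneAggP {n m : ℕ} (A : Matrix (Fin m) (Fin n) ℝ) (b : Fin m → ℝ) : Set (Fin n → ℝ) :=
  ⋂ i : Fin m, convexHull ℝ {x | (∀ j, 0 ≤ x j) ∧ isIntPt x ∧ dotp (A i) x ≤ b i}

/-- Chvátal–Gomory closure of a set `P ⊆ ℝ^n`. -/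
def cgClosure {n : ℕ} (P : Set (Fin n → ℝ)) : Set (Fin n → ℝ) :=
  {x | ∀ (c : Fin n → ℤ) (δ : ℝ),
    (∀ y ∈ P, δ ≤ ∑ j, (c j : ℝ) * y j) → ((⌈δ⌉ : ℤ) : ℝ) ≤ ∑ j, (c j : ℝ) * x j}

/-- 1-row CG closure of a packing polyhedron. -/
def oneCGP {n m : ℕ} (A : Matrix (Fin m) (Fin n) ℝ) (b : Fin m → ℝ) : Set (Fin n → ℝ) :=
  ⋂ i : Fin m, cgClosure {x | (∀ j, 0 ≤ x j) ∧ dotp (A i) x ≤ b i}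

/-- Covering polyhedron with bounds `u j` on coordinates `j ∈ J` (coordinates outside `J`
are unbounded above). -/
def coverLP {n m : ℕ} (A : Matrix (Fin m) (Fin n) ℝ) (b : Fin m → ℝ)
    (J : Finset (Fin n)) (u : Fin n → ℝ) : Set (Fin n → ℝ) :=
  {x | (∀ j, 0 ≤ x j) ∧ (∀ j ∈ J, x j ≤ u j) ∧ ∀ i, b i ≤ dotp (A i) x}

/-- Aggregation closure of a covering polyhedron with bounds. -/
def aggC {n m : ℕ} (A : Matrix (Fin m) (Fin n) ℝ) (b : Fin m → ℝ)
    (J : Finset (Fin n)) (u : Fin n → ℝ) : Set (Fin n → ℝ) :=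
  ⋂ lam : {l : Fin m → ℝ // ∀ i, 0 ≤ l i},
    convexHull ℝ {x | (∀ j, 0 ≤ x j) ∧ isIntPt x ∧ (∀ j ∈ J, x j ≤ u j) ∧
      (∑ i, lam.1 i * b i) ≤ dotp (fun j => ∑ i, lam.1 i * A i j) x}

/-- 1-row aggregation closure of a covering polyhedron with bounds. -/
def oneAggC {n m : ℕ} (A : Matrix (Fin m) (Fin n) ℝ) (b : Fin m → ℝ)
    (J : Finset (Fin n)) (u : Fin n → ℝ) : Set (Fin n → ℝ) :=
  ⋂ i : Fin m, convexHull ℝ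
    {x | (∀ j, 0 ≤ x j) ∧ isIntPt x ∧ (∀ j ∈ J, x j ≤ u j) ∧ b i ≤ dotp (A i) x}

/-- 1-row CG closure of a covering polyhedron with bounds. -/
def oneCGC {n m : ℕ} (A : Matrix (Fin m) (Fin n) ℝ) (b : Fin m → ℝ)
    (J : Finset (Fin n)) (u : Fin n → ℝ) : Set (Fin n → ℝ) :=
  ⋂ i : Fin m, cgClosure {x | (∀ j, 0 ≤ x j) ∧ (∀ j ∈ J, x j ≤ u j) ∧ b i ≤ dotp (A i) x}


namespace Stmt19Aux

lemma dotp_ones {n : ℕ} (x : Fin n → ℝ) : dotp (fun _ => (1:ℝ)) x = ∑ j, x j := by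
  simp [dotp]

lemma convex_halfspace_dotp {n : ℕ} (c : Fin n → ℝ) (r : ℝ) :
    Convex ℝ {x : Fin n → ℝ | r ≤ dotp c x} := by
  intro x hx y hy a b ha hb hab
  simp only [Set.mem_setOf_eq] at *
  have hcomb : dotp c (a • x + b • y) = a * dotp c x + b * dotp c y := by
    unfold dotp
    rw [Finset.mul_sum, Finset.mul_sum, ← Finset.sum_add_distrib]
    refine Finset.sum_congr rfl fun j _ => ?_
    simp only [Pi.add_apply, Pi.smul_apply, smul_eq_mul]
    ring
  rw [hcomb]
  have h1 : a * r ≤ a * dotp c x := mul_le_mul_of_nonneg_left hx ha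
  have h2 : b * r ≤ b * dotp c y := mul_le_mul_of_nonneg_left hy hb
  have h3 : a * r + b * r = r := by rw [← add_mul, hab, one_mul]
  linarith

lemma row_dotp {N : ℕ} (i : Fin N) (x : Fin N → ℝ) :
    dotp (fun j => if i = j then (1:ℝ) else 2) x = 2 * (∑ j, x j) - x i := by
  unfold dotp
  have h : ∀ j : Fin N, (if i = j then (1:ℝ) else 2) * x j
      = 2 * x j - (if j = i then x j else 0) := by
    intro j
    by_cases hj : i = j
    · subst hj; rw [if_pos rfl, if_pos rfl]; ring
    · rw [if_neg hj, if_neg (fun h => hj h.symm)]; ring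
  rw [Finset.sum_congr rfl fun j _ => h j, Finset.sum_sub_distrib,
    Finset.sum_ite_eq' Finset.univ i, ← Finset.mul_sum]
  simp

lemma rows_lb {N : ℕ} (x : Fin N → ℝ)
    (h : ∀ i, 2 ≤ dotp (fun j => if i = j then (1:ℝ) else 2) x) :
    2 * N ≤ (2 * N - 1) * ∑ j, x j := by
  have h2 : ∑ _i : Fin N, (2:ℝ) ≤ ∑ i : Fin N, (2 * (∑ j, x j) - x i) :=
    Finset.sum_le_sum fun i _ => (row_dotp i x) ▸ h i
  rw [Finset.sum_sub_distrib, Finset.sum_const, Finset.sum_const, Finset.card_univ,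
    Fintype.card_fin] at h2
  simp only [nsmul_eq_mul] at h2
  nlinarith [h2]

lemma col_sum {N : ℕ} (j : Fin N) :
    ∑ i : Fin N, (if i = j then (1:ℝ) else 2) = 2 * N - 1 := by
  have h : ∀ i : Fin N, (if i = j then (1:ℝ) else 2)
      = 2 - (if i = j then (1:ℝ) else 0) := by
    intro i; by_cases hi : i = j <;> simp [hi] <;> norm_num
  rw [Finset.sum_congr rfl fun i _ => h i, Finset.sum_sub_distrib,
    Finset.sum_ite_eq' Finset.univ j, Finset.sum_const, Finset.card_univ, Fintype.card_fin]
  simp only [Finset.mem_univ, if_true, nsmul_eq_mul]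
  ring

lemma comb_mem_hull {N : ℕ} {S : Set (Fin N → ℝ)} {w : Fin N → ℝ} {z : Fin N → Fin N → ℝ}
    (hw : ∀ k, 0 ≤ w k) (h1 : ∑ k, w k = 1) (hz : ∀ k, z k ∈ S) :
    (∑ k, w k • z k) ∈ convexHull ℝ S := by
  have hm := Finset.centerMass_mem_convexHull (s := S) Finset.univ
    (fun k _ => hw k) (by rw [h1]; norm_num) (fun k _ => hz k)
  rwa [Finset.centerMass_eq_of_sum_1 _ _ h1] at hm

lemma comb_mem_cg {N : ℕ} {P : Set (Fin N → ℝ)} {w : Fin N → ℝ} {z : Fin N → Fin N → ℝ}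
    (hw : ∀ k, 0 ≤ w k) (h1 : ∑ k, w k = 1) (hz : ∀ k, z k ∈ P)
    (hzint : ∀ k, isIntPt (z k)) :
    (∑ k, w k • z k) ∈ cgClosure P := by
  intro c δ hval
  have hk : ∀ k, ((⌈δ⌉ : ℤ) : ℝ) ≤ ∑ j, (c j : ℝ) * z k j := by
    intro k
    choose m hm using hzint k
    have hint : ∑ j, (c j : ℝ) * z k j = ((∑ j, c j * m j : ℤ) : ℝ) := by
      push_cast
      exact Finset.sum_congr rfl fun j _ => by rw [hm j]
    rw [hint]
    exact_mod_cast Int.ceil_le.mpr (by rw [← hint]; exact hval _ (hz k))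
  have hswap : ∑ j, (c j : ℝ) * (∑ k, w k • z k) j
      = ∑ k, w k * ∑ j, (c j : ℝ) * z k j := by
    simp only [Finset.sum_apply, Pi.smul_apply, smul_eq_mul, Finset.mul_sum]
    rw [Finset.sum_comm]
    exact Finset.sum_congr rfl fun k _ => Finset.sum_congr rfl fun j _ => by ring
  rw [hswap]
  calc ((⌈δ⌉ : ℤ) : ℝ) = (∑ k, w k) * ((⌈δ⌉ : ℤ) : ℝ) := by rw [h1, one_mul]
    _ = ∑ k, w k * ((⌈δ⌉ : ℤ) : ℝ) := by rw [Finset.sum_mul]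
    _ ≤ ∑ k, w k * ∑ j, (c j : ℝ) * z k j :=
        Finset.sum_le_sum fun k _ => mul_le_mul_of_nonneg_left (hk k) (hw k)

lemma le_infVal {n : ℕ} {c : Fin n → ℝ} {S : Set (Fin n → ℝ)} {r : ℝ}
    (h : ∀ x ∈ S, r ≤ dotp c x) : ((r : ℝ) : EReal) ≤ infVal c S :=
  le_iInf₂ fun x hx => EReal.coe_le_coe_iff.mpr (h x hx)

lemma infVal_le {n : ℕ} {c : Fin n → ℝ} {S : Set (Fin n → ℝ)} {x : Fin n → ℝ}
    (hx : x ∈ S) : infVal c S ≤ ((dotp c x : ℝ) : EReal) :=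
  iInf₂_le x hx

/-- weights -/
noncomputable def w (N : ℕ) (i k : Fin N) : ℝ :=
  if k = i then 1/(2*(N:ℝ)-1) else 2/(2*(N:ℝ)-1)

/-- integer points -/
def z (N : ℕ) (i k : Fin N) : Fin N → ℝ :=
  fun l => if k = i then (if l = i then 2 else 0) else (if l = k then 1 else 0)

lemma hpos {N : ℕ} (hN : 2 ≤ N) : (0:ℝ) < 2*(N:ℝ) - 1 := by
  have : (2:ℝ) ≤ N := by exact_mod_cast hN
  linarith

lemma w_nonneg {N : ℕ} (hN : 2 ≤ N) (i k : Fin N) : 0 ≤ w N i k := by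
  have := hpos hN
  unfold w; split_ifs <;> positivity

lemma w_sum {N : ℕ} (hN : 2 ≤ N) (i : Fin N) : ∑ k, w N i k = 1 := by
  have hp := hpos hN
  have h : ∀ k : Fin N, w N i k
      = 2/(2*(N:ℝ)-1) - (if k = i then 1/(2*(N:ℝ)-1) else 0) := by
    intro k; unfold w; by_cases hk : k = i <;> simp [hk] <;> ring
  rw [Finset.sum_congr rfl fun k _ => h k, Finset.sum_sub_distrib,
    Finset.sum_ite_eq' Finset.univ i, Finset.sum_const, Finset.card_univ, Fintype.card_fin]
  simp only [Finset.mem_univ, if_true, nsmul_eq_mul]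
  field_simp
  exact div_self (by linarith)

lemma z_nonneg {N : ℕ} (i k : Fin N) : ∀ l, 0 ≤ z N i k l := by
  intro l; unfold z; split_ifs <;> norm_num

lemma z_int {N : ℕ} (i k : Fin N) : isIntPt (z N i k) := by
  intro l; unfold z
  split_ifs with h1 h2 h3
  · exact ⟨2, by norm_num⟩
  · exact ⟨0, by norm_num⟩
  · exact ⟨1, by norm_num⟩
  · exact ⟨0, by norm_num⟩

lemma z_dotp {N : ℕ} (i k : Fin N) :
    dotp (fun j => if i = j then (1:ℝ) else 2) (z N i k) = 2 := by
  unfold dotp z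
  by_cases hk : k = i
  · subst hk
    rw [Finset.sum_eq_single k]
    · simp
    · intro j _ hj; simp [hj, Ne.symm hj]
    · simp
  · rw [Finset.sum_eq_single k]
    · simp [hk, Ne.symm hk]
    · intro j _ hj; simp [hk, hj, Ne.symm hj]
    · simp

lemma comb_eq {N : ℕ} (hN : 2 ≤ N) (i : Fin N) :
    (∑ k, w N i k • z N i k) = fun _ : Fin N => 2/(2*(N:ℝ)-1) := by
  funext l
  simp only [Finset.sum_apply, Pi.smul_apply, smul_eq_mul]
  unfold w z
  by_cases hl : l = i
  · subst hl
    rw [Finset.sum_eq_single l]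
    · rw [if_pos rfl, if_pos rfl, if_pos rfl]; ring
    · intro k _ hk; simp [hk, Ne.symm hk]
    · simp
  · rw [Finset.sum_eq_single l]
    · simp [hl]
    · intro k _ hk
      by_cases hki : k = i
      · simp [hki, hl]
      · simp [hki, hk, Ne.symm hk]
    · simp

lemma xstar_sum {N : ℕ} (hN : 2 ≤ N) :
    dotp (fun _ : Fin N => (1:ℝ)) (fun _ : Fin N => 2/(2*(N:ℝ)-1))
      = 2 * N / (2 * N - 1) := by
  have hp := hpos hN
  rw [dotp_ones]
  rw [Finset.sum_const, Finset.card_univ, Fintype.card_fin, nsmul_eq_mul]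
  field_simp

end Stmt19Aux

open Stmt19Aux in
/-- For `n ≥ 2`, consider the covering polyhedron
`Q_n = {x ∈ ℝ^n_+ : x_i + ∑_{j ≠ i} 2 x_j ≥ 2, i ∈ [n]}` (no upper bounds, encoded with
`J = ∅`) and the all-ones objective.  Then the 1-row aggregation and 1-row CG closures
have value `2n/(2n-1)`, while the CG and aggregation closures have value at least `2`.
Consequently, for every `ε > 0` there is a covering polyhedron for which neither the
1-row aggregation closure is a `(2-ε)`-approximation of the aggregation closure, nor the
1-row CG closure is a `(2-ε)`-approximation of the CG closure. -/
theorem stmt19 :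
    (∀ N : ℕ, 2 ≤ N →
      infVal (fun _ : Fin N => (1 : ℝ))
          (oneAggC (fun i j : Fin N => if i = j then (1 : ℝ) else 2) (fun _ => 2) ∅ 0)
        = ((2 * N / (2 * N - 1) : ℝ) : EReal) ∧
      infVal (fun _ : Fin N => (1 : ℝ))
          (oneCGC (fun i j : Fin N => if i = j then (1 : ℝ) else 2) (fun _ => 2) ∅ 0)
        = ((2 * N / (2 * N - 1) : ℝ) : EReal) ∧
      ((2 : ℝ) : EReal)
        ≤ infVal (fun _ : Fin N => (1 : ℝ))
            (cgClosure (coverLP (fun i j : Fin N => if i = j then (1 : ℝ) else 2)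
              (fun _ => 2) ∅ 0)) ∧
      ((2 : ℝ) : EReal)
        ≤ infVal (fun _ : Fin N => (1 : ℝ))
            (aggC (fun i j : Fin N => if i = j then (1 : ℝ) else 2) (fun _ => 2) ∅ 0)) ∧
    (∀ ε : ℝ, 0 < ε →
      ∃ (n m : ℕ) (A : Matrix (Fin m) (Fin n) ℝ) (b : Fin m → ℝ),
        (∀ i j, 0 ≤ A i j) ∧ (∀ i, 0 ≤ b i) ∧
        (∀ i j, ∃ q : ℚ, A i j = (q : ℝ)) ∧ (∀ i, ∃ q : ℚ, b i = (q : ℝ)) ∧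
        ∃ c : Fin n → ℝ, (∀ j, 0 ≤ c j) ∧
          ((2 - ε : ℝ) : EReal) * infVal c (oneAggC A b ∅ 0) < infVal c (aggC A b ∅ 0) ∧
          ((2 - ε : ℝ) : EReal) * infVal c (oneCGC A b ∅ 0)
            < infVal c (cgClosure (coverLP A b ∅ 0))) := by
  have main : ∀ N : ℕ, 2 ≤ N →
      infVal (fun _ : Fin N => (1 : ℝ))
          (oneAggC (fun i j : Fin N => if i = j then (1 : ℝ) else 2) (fun _ => 2) ∅ 0)
        = ((2 * N / (2 * N - 1) : ℝ) : EReal) ∧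
      infVal (fun _ : Fin N => (1 : ℝ))
          (oneCGC (fun i j : Fin N => if i = j then (1 : ℝ) else 2) (fun _ => 2) ∅ 0)
        = ((2 * N / (2 * N - 1) : ℝ) : EReal) ∧
      ((2 : ℝ) : EReal)
        ≤ infVal (fun _ : Fin N => (1 : ℝ))
            (cgClosure (coverLP (fun i j : Fin N => if i = j then (1 : ℝ) else 2)
              (fun _ => 2) ∅ 0)) ∧
      ((2 : ℝ) : EReal)
        ≤ infVal (fun _ : Fin N => (1 : ℝ))
            (aggC (fun i j : Fin N => if i = j then (1 : ℝ) else 2) (fun _ => 2) ∅ 0) := by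
    intro N hN
    have hp := hpos hN
    -- row cast helper for CG arguments
    have hcast : ∀ (i : Fin N) (y : Fin N → ℝ),
        ∑ j, (((if i = j then (1:ℤ) else 2) : ℤ) : ℝ) * y j
          = dotp (fun j => if i = j then (1:ℝ) else 2) y := by
      intro i y
      unfold dotp
      refine Finset.sum_congr rfl fun j _ => ?_
      split_ifs with h <;> simp [h]
    refine ⟨?_, ?_, ?_, ?_⟩
    · -- oneAggC value
      apply le_antisymm
      · have hx1 : (fun _ : Fin N => 2/(2*(N:ℝ)-1)) ∈
            oneAggC (fun i j : Fin N => if i = j then (1 : ℝ) else 2) (fun _ => 2) ∅ 0 := by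
          apply Set.mem_iInter.mpr
          intro i
          have hz : ∀ k, z N i k ∈ {x : Fin N → ℝ | (∀ j, 0 ≤ x j) ∧ isIntPt x ∧
              (∀ j ∈ (∅ : Finset (Fin N)), x j ≤ (0 : Fin N → ℝ) j) ∧
              (2:ℝ) ≤ dotp (fun j => if i = j then (1:ℝ) else 2) x} :=
            fun k => ⟨z_nonneg i k, z_int i k, by simp, (z_dotp i k).ge⟩
          have hm := comb_mem_hull (w_nonneg hN i) (w_sum hN i) hz
          rwa [comb_eq hN i] at hm
        have := infVal_le (c := fun _ : Fin N => (1:ℝ)) hx1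
        rwa [xstar_sum hN] at this
      · apply le_infVal
        intro x hx
        have hrows : ∀ i, 2 ≤ dotp (fun j => if i = j then (1:ℝ) else 2) x := by
          intro i
          have hxi := Set.mem_iInter.mp hx i
          have hsub : {x : Fin N → ℝ | (∀ j, 0 ≤ x j) ∧ isIntPt x ∧
              (∀ j ∈ (∅ : Finset (Fin N)), x j ≤ (0 : Fin N → ℝ) j) ∧
              (2:ℝ) ≤ dotp (fun j => if i = j then (1:ℝ) else 2) x}
              ⊆ {y : Fin N → ℝ | 2 ≤ dotp (fun j => if i = j then (1:ℝ) else 2) y} :=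
            fun y hy => hy.2.2.2
          exact convexHull_min hsub (convex_halfspace_dotp _ 2) hxi
        rw [dotp_ones, div_le_iff₀ hp]
        linarith [rows_lb x hrows]
    · -- oneCGC value
      apply le_antisymm
      · have hx1 : (fun _ : Fin N => 2/(2*(N:ℝ)-1)) ∈
            oneCGC (fun i j : Fin N => if i = j then (1 : ℝ) else 2) (fun _ => 2) ∅ 0 := by
          apply Set.mem_iInter.mpr
          intro i
          have hz : ∀ k, z N i k ∈ {x : Fin N → ℝ | (∀ j, 0 ≤ x j) ∧
              (∀ j ∈ (∅ : Finset (Fin N)), x j ≤ (0 : Fin N → ℝ) j) ∧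
              (2:ℝ) ≤ dotp (fun j => if i = j then (1:ℝ) else 2) x} :=
            fun k => ⟨z_nonneg i k, by simp, (z_dotp i k).ge⟩
          have hm := comb_mem_cg (w_nonneg hN i) (w_sum hN i) hz (fun k => z_int i k)
          rwa [comb_eq hN i] at hm
        have := infVal_le (c := fun _ : Fin N => (1:ℝ)) hx1
        rwa [xstar_sum hN] at this
      · apply le_infVal
        intro x hx
        have hrows : ∀ i, 2 ≤ dotp (fun j => if i = j then (1:ℝ) else 2) x := by
          intro i
          have hxi := Set.mem_iInter.mp hx i
          have h := hxi (fun j => if i = j then (1:ℤ) else 2) 2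
            (fun y hy => by rw [hcast i y]; exact hy.2.2)
          rw [hcast i x] at h
          have hceil : ⌈(2:ℝ)⌉ = 2 := by norm_num
          rw [hceil] at h
          exact_mod_cast h
        rw [dotp_ones, div_le_iff₀ hp]
        linarith [rows_lb x hrows]
    · -- CG closure lower bound
      apply le_infVal
      intro x hx
      have h := hx (fun _ => (1:ℤ)) (2*(N:ℝ)/(2*(N:ℝ)-1)) ?_
      · have hones : ∀ y : Fin N → ℝ, ∑ j, (((1:ℤ) : ℤ) : ℝ) * y j = ∑ j, y j := by
          intro y; simp
        rw [hones x] at h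
        have h1 : (1:ℤ) < ⌈2*(N:ℝ)/(2*(N:ℝ)-1)⌉ := by
          apply Int.lt_ceil.mpr
          rw [lt_div_iff₀ hp]
          push_cast
          linarith
        have h2 : ((2:ℤ) : ℝ) ≤ ((⌈2*(N:ℝ)/(2*(N:ℝ)-1)⌉ : ℤ) : ℝ) := by
          exact_mod_cast (by omega : (2:ℤ) ≤ ⌈2*(N:ℝ)/(2*(N:ℝ)-1)⌉)
        rw [dotp_ones]
        push_cast at h2
        linarith
      · intro y hy
        have hs := rows_lb y hy.2.2
        have hones : ∑ j, (((1:ℤ) : ℤ) : ℝ) * y j = ∑ j, y j := by simp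
        rw [hones, div_le_iff₀ hp]
        linarith
    · -- aggregation closure lower bound
      apply le_infVal
      intro x hx
      have hxl := Set.mem_iInter.mp hx ⟨fun _ => (1:ℝ), fun _ => zero_le_one⟩
      have hsub : {y : Fin N → ℝ | (∀ j, 0 ≤ y j) ∧ isIntPt y ∧
          (∀ j ∈ (∅ : Finset (Fin N)), y j ≤ (0 : Fin N → ℝ) j) ∧
          (∑ i : Fin N, (1:ℝ) * (fun _ : Fin N => (2:ℝ)) i) ≤
            dotp (fun j => ∑ i : Fin N, (1:ℝ) *
              ((fun i j : Fin N => if i = j then (1:ℝ) else 2) i j)) y}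
          ⊆ {y : Fin N → ℝ | 2 ≤ dotp (fun _ : Fin N => (1:ℝ)) y} := by
        intro y hy
        obtain ⟨hy0, hyint, -, hyagg⟩ := hy
        have hbsum : (∑ i : Fin N, (1:ℝ) * (fun _ : Fin N => (2:ℝ)) i) = 2*N := by
          simp [Finset.sum_const, Finset.card_univ, mul_comm]
        have hAsum : dotp (fun j => ∑ i : Fin N, (1:ℝ) *
            ((fun i j : Fin N => if i = j then (1:ℝ) else 2) i j)) y
            = (2*(N:ℝ)-1) * ∑ j, y j := by
          unfold dotp
          have hc : ∀ j : Fin N, (∑ i : Fin N, (1:ℝ) *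
              (if i = j then (1:ℝ) else 2)) = 2*(N:ℝ)-1 := by
            intro j
            simpa using col_sum j
          simp only [hc]
          rw [← Finset.mul_sum]
        have hcon : 2*(N:ℝ) ≤ (2*(N:ℝ)-1) * ∑ j, y j := by
          rw [← hAsum, ← hbsum]; exact hyagg
        choose m hm using hyint
        have hsy : ∑ j, y j = ((∑ j, m j : ℤ) : ℝ) := by
          push_cast
          exact Finset.sum_congr rfl fun j _ => hm j
        have h1 : (1:ℝ) < ((∑ j, m j : ℤ) : ℝ) := by
          by_contra hle
          push_neg at hle
          rw [hsy] at hcon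
          nlinarith
        have h2 : (2:ℤ) ≤ ∑ j, m j := by
          have : (1:ℤ) < ∑ j, m j := by exact_mod_cast h1
          omega
        show (2:ℝ) ≤ dotp (fun _ : Fin N => (1:ℝ)) y
        rw [dotp_ones, hsy]
        exact_mod_cast h2
      have hmem := convexHull_min hsub (convex_halfspace_dotp (fun _ : Fin N => (1:ℝ)) 2) hxl
      exact hmem
  refine ⟨main, ?_⟩
  intro ε hε
  set N : ℕ := ⌈1/ε⌉₊ + 2 with hNdef
  have hN2 : 2 ≤ N := Nat.le_add_left 2 _
  obtain ⟨h1, h2, h3, h4⟩ := main N hN2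
  have hp := hpos hN2
  have hεN : 1 < ε * N := by
    have hc : (1/ε:ℝ) ≤ (⌈1/ε⌉₊ : ℕ) := Nat.le_ceil _
    have hlt : (1/ε:ℝ) < N := by
      have hcN : ((⌈1/ε⌉₊ : ℕ) : ℝ) + 2 = (N:ℝ) := by rw [hNdef]; push_cast; ring
      linarith
    calc (1:ℝ) = ε * (1/ε) := by field_simp
      _ < ε * N := mul_lt_mul_of_pos_left hlt hε
  have hkey : (2-ε) * (2*(N:ℝ)/(2*(N:ℝ)-1)) < 2 := by
    rw [← mul_div_assoc, div_lt_iff₀ hp]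
    nlinarith
  exact ⟨N, N, fun i j => if i = j then 1 else 2, fun _ => 2,
    fun i j => by dsimp only; split_ifs <;> norm_num,
    fun i => by norm_num,
    fun i j => ⟨if i = j then 1 else 2, by dsimp only; split_ifs <;> norm_num⟩,
    fun i => ⟨2, by norm_num⟩,
    fun _ => 1, fun j => zero_le_one,
    by rw [h1, ← EReal.coe_mul]
       exact lt_of_lt_of_le (EReal.coe_lt_coe_iff.mpr hkey) h4,
    by rw [h2, ← EReal.coe_mul]
       exact lt_of_lt_of_le (EReal.coe_lt_coe_iff.mpr hkey) h3⟩
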